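/- Let π_{vw} = v=u₁, u₂, …, u_{n'}=w be the unique path from v to w in T, and suppose the occupant of w in configuration A is a hole. Then the plan α_{vw} = (u_{n'-1}→w, u_{n'-2}→u_{n'-1}, …, v→u₂) is applicable from A, has length d(v,w), and in the resulting configuration ρ(A,α_{vw}) the occupant of u_j in A occupies u_{j+1} for each j < n', the hole that was on w occupies v (in particular v is unoccupied by pebbles after the plan), and all occupants of vertices outside π_{vw} are unchanged. -/
import Mathlib


namespace PMT

variable {V P H : Type}

/-- A configuration assigns to each pebble or hole a vertex, bijectively. -/
abbrev Config (P H V : Type) : Type := (P ⊕ H) ≃ V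

/- Apply a single move `u → v`: applicable iff `(u,v)` is an edge and the occupant of `v`
is a hole; applying it swaps the occupants of `u` and `v`. -/
open Classical in
noncomputable def applyMove (G : SimpleGraph V) (A : Config P H V) (m : V × V) :
    Option (Config P H V) :=
  if G.Adj m.1 m.2 ∧ (A.symm m.2).isRight = true then
    some (A.trans (Equiv.swap m.1 m.2))
  else
    none

/-- Apply a plan (finite list of moves) in order; defined (`some`) only when each
successive move is applicable. -/
noncomputable def applyPlan (G : SimpleGraph V) :
    Config P H V → List (V × V) → Option (Config P H V)
  | A, [] => some A
  | A, m :: f => (applyMove G A m).bind fun B => applyPlan G B f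

/-- The plan `α_{vw}` (bring hole from `w` to `v`) along a path `p` from `v` to `w`:
the moves `(u_{n'-1} → w, u_{n'-2} → u_{n'-1}, …, v → u₂)`. -/
def bringHolePlan (G : SimpleGraph V) {v w : V} (p : G.Walk v w) : List (V × V) :=
  ((List.range p.length).map fun i => (p.getVert i, p.getVert (i + 1))).reverse

lemma applyPlan_append (G : SimpleGraph V) (A : Config P H V) (l1 l2 : List (V × V)) :
    applyPlan G A (l1 ++ l2) = (applyPlan G A l1).bind fun B => applyPlan G B l2 := by
  induction l1 generalizing A with
  | nil => simp [applyPlan]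
  | cons m f ih =>
    simp only [List.cons_append, applyPlan]
    cases applyMove G A m with
    | none => simp
    | some B => simp [ih]

lemma bringHolePlan_length (G : SimpleGraph V) {v w : V} (p : G.Walk v w) :
    (bringHolePlan G p).length = p.length := by
  simp [bringHolePlan]

open SimpleGraph Walk in
lemma bringHolePlan_cons (G : SimpleGraph V) {a b w : V} (h : G.Adj a b) (q : G.Walk b w) :
    bringHolePlan G (Walk.cons h q) = bringHolePlan G q ++ [(a, b)] := by
  simp only [bringHolePlan, Walk.length_cons, List.range_succ_eq_map, List.map_cons,
    List.map_map, List.reverse_cons]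
  have h1 : (List.map ((fun i => ((Walk.cons h q).getVert i, (Walk.cons h q).getVert (i + 1))) ∘
      Nat.succ) (List.range q.length)) =
      List.map (fun i => (q.getVert i, q.getVert (i + 1))) (List.range q.length) := by
    apply List.map_congr_left
    intro i _
    simp [Walk.getVert_cons_succ]
  rw [h1]
  simp [Walk.getVert_cons_succ]

open SimpleGraph Walk in
lemma getVert_mem_support {G : SimpleGraph V} {v w : V} (p : G.Walk v w) (i : ℕ) :
    p.getVert i ∈ p.support := by
  rw [Walk.mem_support_iff_exists_getVert]
  rcases le_or_gt i p.length with hi | hi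
  · exact ⟨i, rfl, hi⟩
  · exact ⟨p.length, by rw [p.getVert_of_length_le hi.le, p.getVert_length], le_rfl⟩

open SimpleGraph Walk in
lemma getVert_ne_start {G : SimpleGraph V} {u w : V} {q : G.Walk u w} (hq : q.IsPath)
    {i : ℕ} (hi : i ≠ 0) (hle : i ≤ q.length) : q.getVert i ≠ u := by
  cases q with
  | nil => simp at hle; omega
  | cons h r =>
    obtain ⟨j, rfl⟩ := Nat.exists_eq_succ_of_ne_zero hi
    rw [Walk.getVert_cons_succ]
    rw [Walk.cons_isPath_iff] at hq
    intro hcon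
    exact hq.2 (hcon ▸ getVert_mem_support r j)

end PMT

open SimpleGraph Walk

/-- if the occupant of `w` is a hole and `p` is the (unique) path from `v` to
`w`, then `α_{vw}` is applicable, has length `d(v,w)`, each occupant of `u_j` moves to
`u_{j+1}`, the hole on `w` moves to `v` (so `v` is unoccupied by pebbles afterwards), and
occupants outside the path are unchanged. -/
theorem bring_hole {V P H : Type} [Fintype V] [Fintype P] [Fintype H]
    (G : SimpleGraph V) (hT : G.IsTree)
    (hcard : Fintype.card V = Fintype.card P + Fintype.card H)
    (A : PMT.Config P H V) (v w : V) (p : G.Walk v w) (hp : p.IsPath)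
    (hw : (A.symm w).isRight = true) :
    ∃ B : PMT.Config P H V,
      PMT.applyPlan G A (PMT.bringHolePlan G p) = some B ∧
      (PMT.bringHolePlan G p).length = p.length ∧
      (∀ i : ℕ, i < p.length → B (A.symm (p.getVert i)) = p.getVert (i + 1)) ∧
      B (A.symm w) = v ∧
      (B.symm v).isRight = true ∧
      (∀ x : V, x ∉ p.support → B.symm x = A.symm x) := by
  classical
  induction p with
  | nil =>
    refine ⟨A, ?_, ?_, ?_, ?_, ?_, ?_⟩
    · simp [PMT.bringHolePlan, PMT.applyPlan]
    · exact PMT.bringHolePlan_length G _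
    · intro i hi; simp at hi
    · simp
    · simpa using hw
    · intro x _; rfl
  | @cons a b w h q ih =>
    rw [Walk.cons_isPath_iff] at hp
    obtain ⟨B', h1, _, h3, h4, h5, h6⟩ := ih hp.1 hw
    have hBb : B'.symm b = A.symm w := by
      rw [← h4, Equiv.symm_apply_apply]
    have hcond : G.Adj (a, b).1 (a, b).2 ∧ ((Equiv.symm B') (a, b).2).isRight = true :=
      ⟨h, by rw [hBb]; exact hw⟩
    have hmove : PMT.applyMove G B' (a, b) = some (B'.trans (Equiv.swap a b)) := by
      rw [PMT.applyMove, if_pos hcond]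
    set B : PMT.Config P H V := B'.trans (Equiv.swap a b) with hB
    have happly : PMT.applyPlan G A (PMT.bringHolePlan G (Walk.cons h q)) = some B := by
      rw [PMT.bringHolePlan_cons, PMT.applyPlan_append, h1]
      simp [PMT.applyPlan, hmove]
    refine ⟨B, happly, PMT.bringHolePlan_length G _, ?_, ?_, ?_, ?_⟩
    · intro i hi
      match i with
      | 0 =>
        have : B' (A.symm a) = a := by
          rw [← h6 a hp.2, Equiv.apply_symm_apply]
        simp only [Walk.getVert_zero, Walk.getVert_cons_succ, hB, Equiv.trans_apply, this]
        simp [Equiv.swap_apply_left]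
      | (j + 1) =>
        have hj : j < q.length := by
          simpa [Walk.length_cons] using Nat.lt_of_succ_lt_succ hi
        have hne1 : q.getVert (j + 1) ≠ a := by
          intro hc; exact hp.2 (hc ▸ PMT.getVert_mem_support q (j + 1))
        have hne2 : q.getVert (j + 1) ≠ b :=
          PMT.getVert_ne_start hp.1 (Nat.succ_ne_zero j) hj
        simp only [Walk.getVert_cons_succ, hB, Equiv.trans_apply, h3 j hj]
        exact Equiv.swap_apply_of_ne_of_ne hne1 hne2
    · simp only [hB, Equiv.trans_apply, h4, Equiv.swap_apply_right]
    · have : B.symm a = A.symm w := by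
        simp only [hB, Equiv.symm_trans_apply, Equiv.symm_swap, Equiv.swap_apply_left, hBb]
      rw [this]; exact hw
    · intro x hx
      rw [Walk.support_cons, List.mem_cons] at hx
      push_neg at hx
      have hxb : x ≠ b := by
        intro hc; exact hx.2 (hc ▸ q.start_mem_support)
      simp only [hB, Equiv.symm_trans_apply, Equiv.symm_swap,
        Equiv.swap_apply_of_ne_of_ne hx.1 hxb]
      exact h6 x hx.2
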